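/- Let P be a poset on [n], 𝔽_q a finite field, and I, J order ideals of P. The following are equivalent: (i) supp(u) ∩ (J^c)_M = ∅ for every u ∈ S_I; (ii) M(I) ∩ (J^c)_M = ∅; (iii) I ∩ (J^c)_M = ∅; (iv) I_M ∩ J^c = ∅. (Lemma 3.6.) -/

import Mathlib

open scoped BigOperators
open Finset

noncomputable section
open scoped Classical

/-- `I ⊆ [n]` is an order ideal with respect to the order relation `le`. -/
def IsIdeal {n : ℕ} (le : Fin n → Fin n → Prop) (I : Finset (Fin n)) : Prop :=
  ∀ a ∈ I, ∀ b, le b a → b ∈ I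

/-- `⟨X⟩_P` : the smallest order ideal (w.r.t. `le`) containing `X`. -/
def idealCl {n : ℕ} (le : Fin n → Fin n → Prop) (X : Finset (Fin n)) : Finset (Fin n) :=
  Finset.univ.filter fun b => ∃ a ∈ X, le b a

/-- `M(A)` : the set of maximal elements of `A` with respect to `le`. -/
def maxSet {n : ℕ} (le : Fin n → Fin n → Prop) (A : Finset (Fin n)) : Finset (Fin n) :=
  A.filter fun a => ∀ b ∈ A, le a b → b = a

/-- `E` is an equivalence relation on the set of order ideals of the poset `le`. -/
def EqvOnIdeals {n : ℕ} (le : Fin n → Fin n → Prop)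
    (E : Finset (Fin n) → Finset (Fin n) → Prop) : Prop :=
  (∀ I J, E I J → IsIdeal le I ∧ IsIdeal le J) ∧
  (∀ I, IsIdeal le I → E I I) ∧
  (∀ I J, E I J → E J I) ∧
  (∀ I J K, E I J → E J K → E I K)

/-- support of a vector -/
def supp {n : ℕ} {F : Type} [Field F] [Fintype F] (v : Fin n → F) : Finset (Fin n) :=
  Finset.univ.filter fun i => v i ≠ 0

/-- standard dot product -/
def dot {n : ℕ} {F : Type} [Field F] [Fintype F] (u v : Fin n → F) : F := ∑ i, u i * v i

/-- the sphere `S_I = {v : ⟨supp v⟩_P = I}` -/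
def sph {n : ℕ} (F : Type) [Field F] [Fintype F] (le : Fin n → Fin n → Prop)
    (I : Finset (Fin n)) : Finset (Fin n → F) :=
  Finset.univ.filter fun v => idealCl le (supp v) = I

/-- the dual sphere `S_{J^c} = {v : ⟨supp v⟩_{P*} = J^c}` -/
def sphD {n : ℕ} (F : Type) [Field F] [Fintype F] (le : Fin n → Fin n → Prop)
    (J : Finset (Fin n)) : Finset (Fin n → F) :=
  Finset.univ.filter fun v => idealCl (fun a b => le b a) (supp v) = Jᶜ

/-- the `E`-sphere `S_{Ī,E} = {v : (⟨supp v⟩_P, I) ∈ E}` -/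
def sphE {n : ℕ} (F : Type) [Field F] [Fintype F] (le : Fin n → Fin n → Prop)
    (E : Finset (Fin n) → Finset (Fin n) → Prop) (I : Finset (Fin n)) :
    Finset (Fin n → F) :=
  Finset.univ.filter fun v => E (idealCl le (supp v)) I

/-- the `E*`-sphere `S_{J̄^c,E*} = {v : ⟨supp v⟩_{P*} = K^c for some ideal K with (K,J) ∈ E}` -/
def sphED {n : ℕ} (F : Type) [Field F] [Fintype F] (le : Fin n → Fin n → Prop)
    (E : Finset (Fin n) → Finset (Fin n) → Prop) (J : Finset (Fin n)) :
    Finset (Fin n → F) :=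
  Finset.univ.filter fun v =>
    ∃ K, IsIdeal le K ∧ E K J ∧ idealCl (fun a b => le b a) (supp v) = Kᶜ

/-- the dual code `C^⊥` -/
def dualCode {n : ℕ} {F : Type} [Field F] [Fintype F] (C : Submodule F (Fin n → F)) :
    Submodule F (Fin n → F) where
  carrier := {u | ∀ v ∈ C, dot u v = 0}
  zero_mem' := by intro v hv; simp [dot]
  add_mem' := by
    intro a b ha hb v hv
    have h1 := ha v hv
    have h2 := hb v hv
    simp only [dot, Pi.add_apply] at *
    simp [add_mul, Finset.sum_add_distrib, h1, h2]
  smul_mem' := by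
    intro c a ha v hv
    have h1 := ha v hv
    simp only [dot, Pi.smul_apply, smul_eq_mul] at *
    simp [mul_assoc, ← Finset.mul_sum, h1]

/-- `A_{Ī,E}(C) = |C ∩ S_{Ī,E}|` -/
def AE {n : ℕ} {F : Type} [Field F] [Fintype F] (le : Fin n → Fin n → Prop)
    (E : Finset (Fin n) → Finset (Fin n) → Prop)
    (C : Submodule F (Fin n → F)) (I : Finset (Fin n)) : ℕ :=
  ((sphE F le E I).filter fun v => v ∈ C).card

/-- `A_{J̄^c,E*}(D) = |D ∩ S_{J̄^c,E*}|` -/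
def AED {n : ℕ} {F : Type} [Field F] [Fintype F] (le : Fin n → Fin n → Prop)
    (E : Finset (Fin n) → Finset (Fin n) → Prop)
    (D : Submodule F (Fin n → F)) (J : Finset (Fin n)) : ℕ :=
  ((sphED F le E J).filter fun v => v ∈ D).card

/-- `E` is a MacWilliams-type equivalence relation (w.r.t. the field `F`). -/
def IsMacWilliamsType {n : ℕ} (F : Type) [Field F] [Fintype F]
    (le : Fin n → Fin n → Prop) (E : Finset (Fin n) → Finset (Fin n) → Prop) : Prop :=
  ∀ C₁ C₂ : Submodule F (Fin n → F),
    (∀ I, IsIdeal le I → AE le E C₁ I = AE le E C₂ I) →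
    ∀ J, IsIdeal le J → AED le E (dualCode C₁) J = AED le E (dualCode C₂) J

/-- a hierarchical poset (ordinal sum of antichains) -/
def IsHierarchical {n : ℕ} (le : Fin n → Fin n → Prop) : Prop :=
  ∃ l : Fin n → ℕ, ∀ i j, (le i j ∧ i ≠ j) ↔ l i < l j

/-- `σ` is an automorphism of the poset `le`. -/
def IsAut {n : ℕ} (le : Fin n → Fin n → Prop) (σ : Equiv.Perm (Fin n)) : Prop :=
  ∀ x y, le x y ↔ le (σ x) (σ y)

/-- `A` and `B` are order-isomorphic with the induced orders. -/
def OrdIso {n : ℕ} (le : Fin n → Fin n → Prop) (A B : Finset (Fin n)) : Prop :=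
  ∃ e : {x // x ∈ A} ≃ {x // x ∈ B}, ∀ a b : {x // x ∈ A}, le ↑a ↑b ↔ le ↑(e a) ↑(e b)



lemma exists_max_above {n : ℕ} (le : Fin n → Fin n → Prop) [IsPartialOrder (Fin n) le]
    (I : Finset (Fin n)) : ∀ a ∈ I, ∃ m ∈ I, le a m ∧ ∀ b ∈ I, le m b → b = m := by
  have H : ∀ k (a : Fin n), a ∈ I → (I.filter (fun b => le a b)).card ≤ k →
      ∃ m ∈ I, le a m ∧ ∀ b ∈ I, le m b → b = m := by
    intro k
    induction k with
    | zero =>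
      intro a ha h
      exfalso
      have h1 : a ∈ I.filter (fun b => le a b) := mem_filter.mpr ⟨ha, Std.Refl.refl a⟩
      have := card_pos.mpr ⟨a, h1⟩
      omega
    | succ k ih =>
      intro a ha h
      by_cases hmax : ∀ b ∈ I, le a b → b = a
      · exact ⟨a, ha, Std.Refl.refl a, hmax⟩
      · push_neg at hmax
        obtain ⟨b, hbI, hab, hne⟩ := hmax
        have hsub : I.filter (fun c => le b c) ⊂ I.filter (fun c => le a c) := by
          constructor
          · intro c hc
            rw [mem_filter] at hc ⊢
            exact ⟨hc.1, IsTrans.trans _ _ _ hab hc.2⟩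
          · intro hcon
            have h2 : a ∈ I.filter (fun c => le b c) :=
              hcon (mem_filter.mpr ⟨ha, Std.Refl.refl a⟩)
            rw [mem_filter] at h2
            exact hne (Std.Antisymm.antisymm _ _ h2.2 hab)
        have hcard := card_lt_card hsub
        obtain ⟨m, hm, hbm, hmx⟩ := ih b hbI (by omega)
        exact ⟨m, hm, IsTrans.trans _ _ _ hab hbm, hmx⟩
  intro a ha
  exact H _ a ha le_rfl

lemma mem_maxSet_iff {n : ℕ} (le : Fin n → Fin n → Prop) (A : Finset (Fin n)) (a : Fin n) :
    a ∈ maxSet le A ↔ a ∈ A ∧ ∀ b ∈ A, le a b → b = a := by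
  simp [maxSet]

/-- Lemma 3.6: four equivalent conditions. -/
theorem stmt_9 {n : ℕ} (hn : 0 < n) (le : Fin n → Fin n → Prop)
    [IsPartialOrder (Fin n) le]
    (F : Type) [Field F] [Fintype F]
    (I J : Finset (Fin n)) (hI : IsIdeal le I) (hJ : IsIdeal le J) :
    [ (∀ u ∈ sph F le I, supp u ∩ (Jᶜ \ maxSet (fun a b => le b a) Jᶜ) = ∅),
      maxSet le I ∩ (Jᶜ \ maxSet (fun a b => le b a) Jᶜ) = ∅,
      I ∩ (Jᶜ \ maxSet (fun a b => le b a) Jᶜ) = ∅,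
      (I \ maxSet le I) ∩ Jᶜ = ∅ ].TFAE := by
  have hup : ∀ a b, a ∈ Jᶜ → le a b → b ∈ Jᶜ := by
    intro a b ha hab
    rw [Finset.mem_compl] at ha ⊢
    exact fun hb => ha (hJ b hb a hab)
  tfae_have 3 → 1 := by
    intro h3 u hu
    rw [sph, mem_filter] at hu
    rw [eq_empty_iff_forall_notMem]
    intro x hx
    rw [mem_inter] at hx
    have hxI : x ∈ I := by
      rw [← hu.2]
      simp only [idealCl, mem_filter, mem_univ, true_and]
      exact ⟨x, hx.1, Std.Refl.refl x⟩
    have := eq_empty_iff_forall_notMem.mp h3 x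
    exact this (mem_inter.mpr ⟨hxI, hx.2⟩)
  tfae_have 1 → 2 := by
    intro h1
    set u : Fin n → F := fun i => if i ∈ maxSet le I then (1 : F) else 0 with hu
    have hsupp : supp u = maxSet le I := by
      ext i
      simp only [supp, mem_filter, mem_univ, true_and, hu]
      by_cases h : i ∈ maxSet le I <;> simp [h]
    have hcl : idealCl le (supp u) = I := by
      rw [hsupp]
      ext b
      simp only [idealCl, mem_filter, mem_univ, true_and]
      constructor
      · rintro ⟨a, haM, hba⟩
        rw [mem_maxSet_iff] at haM
        exact hI a haM.1 b hba
      · intro hb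
        obtain ⟨m, hm, hbm, hmx⟩ := exists_max_above le I b hb
        exact ⟨m, (mem_maxSet_iff le I m).mpr ⟨hm, hmx⟩, hbm⟩
    have husph : u ∈ sph F le I := by
      rw [sph, mem_filter]
      exact ⟨mem_univ _, hcl⟩
    have := h1 u husph
    rwa [hsupp] at this
  tfae_have 2 → 3 := by
    intro h2
    rw [eq_empty_iff_forall_notMem]
    intro a ha
    rw [mem_inter, mem_sdiff] at ha
    obtain ⟨haI, haJc, haNm⟩ := ha
    obtain ⟨m, hmI, ham, hmx⟩ := exists_max_above le I a haI
    have hbex : ∃ b ∈ Jᶜ, le b a ∧ b ≠ a := by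
      rw [mem_maxSet_iff] at haNm
      push_neg at haNm
      obtain ⟨b, hb, hba, hne⟩ := haNm haJc
      exact ⟨b, hb, hba, hne⟩
    obtain ⟨b, hbJc, hba, hbne⟩ := hbex
    have hmJc : m ∈ Jᶜ := hup a m haJc ham
    have hmNm : m ∉ maxSet (fun a b => le b a) Jᶜ := by
      rw [mem_maxSet_iff]
      push_neg
      intro _
      refine ⟨b, hbJc, IsTrans.trans _ _ _ hba ham, fun hbm => ?_⟩
      exact hbne (hbm ▸ Std.Antisymm.antisymm _ _ (hbm ▸ hba : le m a) ham ▸ hbm.symm ▸ rfl)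
    have := eq_empty_iff_forall_notMem.mp h2 m
    exact this (mem_inter.mpr ⟨(mem_maxSet_iff le I m).mpr ⟨hmI, hmx⟩,
      mem_sdiff.mpr ⟨hmJc, hmNm⟩⟩)
  tfae_have 3 → 4 := by
    intro h3
    rw [eq_empty_iff_forall_notMem]
    intro a ha
    rw [mem_inter, mem_sdiff] at ha
    obtain ⟨⟨haI, haNm⟩, haJc⟩ := ha
    rw [mem_maxSet_iff] at haNm
    push_neg at haNm
    obtain ⟨b, hbI, hab, hbne⟩ := haNm haI
    have hbJc : b ∈ Jᶜ := hup a b haJc hab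
    have hbNm : b ∉ maxSet (fun a b => le b a) Jᶜ := by
      rw [mem_maxSet_iff]
      push_neg
      exact fun _ => ⟨a, haJc, hab, fun h => hbne h.symm⟩
    have := eq_empty_iff_forall_notMem.mp h3 b
    exact this (mem_inter.mpr ⟨hbI, mem_sdiff.mpr ⟨hbJc, hbNm⟩⟩)
  tfae_have 4 → 3 := by
    intro h4
    rw [eq_empty_iff_forall_notMem]
    intro a ha
    rw [mem_inter, mem_sdiff] at ha
    obtain ⟨haI, haJc, haNm⟩ := ha
    rw [mem_maxSet_iff] at haNm
    push_neg at haNm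
    obtain ⟨b, hbJc, hba, hbne⟩ := haNm haJc
    have hbI : b ∈ I := hI a haI b hba
    have hbNM : b ∉ maxSet le I := by
      rw [mem_maxSet_iff]
      push_neg
      exact fun _ => ⟨a, haI, hba, fun h => hbne h.symm⟩
    have := eq_empty_iff_forall_notMem.mp h4 b
    exact this (mem_inter.mpr ⟨mem_sdiff.mpr ⟨hbI, hbNM⟩, hbJc⟩)
  tfae_finish


end
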